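/- Let ζ be a nonnegative integrable random vector in ℝ^n, K = E[ζ B₁] the expectation (in the sense of support functions: h(K,u) = E h(ζB₁, u)) of the random diagonal transform of the ℓ₁-ball. For j ∈ {1,...,n}, if P(ζⱼ = 0) = 0 then the support set F(K, eⱼ) is a singleton. -/

import Mathlib

open MeasureTheory Finset

/-- Hadamard (componentwise) product. -/
def had {n : ℕ} (u v : Fin n → ℝ) : Fin n → ℝ := fun i => u i * v i

/-- Support function of a set `K ⊆ ℝⁿ`. -/
noncomputable def suppFn {n : ℕ} (K : Set (Fin n → ℝ)) (u : Fin n → ℝ) : ℝ :=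
  sSup ((fun x => ∑ i, u i * x i) '' K)

lemma suppFn_had {n : ℕ} (j : Fin n) (c u : Fin n → ℝ) :
    suppFn (had c '' {x | ∑ i, |x i| ≤ 1}) u
      = Finset.univ.sup' ⟨j, Finset.mem_univ j⟩ (fun k => |u k * c k|) := by
  set M := Finset.univ.sup' ⟨j, Finset.mem_univ j⟩ (fun k => |u k * c k|) with hM
  have hMnn : 0 ≤ M := le_trans (abs_nonneg (u j * c j)) (Finset.le_sup' (fun k => |u k * c k|) (Finset.mem_univ j))
  apply IsGreatest.csSup_eq
  constructor
  · obtain ⟨k, -, hk⟩ := Finset.exists_mem_eq_sup' ⟨j, Finset.mem_univ j⟩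
      (fun k => |u k * c k|)
    set s : ℝ := if 0 ≤ u k * c k then 1 else -1 with hs
    refine ⟨had c (Pi.single k s), ⟨Pi.single k s, ?_, rfl⟩, ?_⟩
    · have : ∑ i, |(Pi.single k s : Fin n → ℝ) i| = |s| := by
        simp [Pi.single_apply, apply_ite abs]
      rw [Set.mem_setOf_eq, this, hs]
      split <;> norm_num
    · have : ∑ i, u i * had c (Pi.single k s) i = (u k * c k) * s := by
        simp [had, Pi.single_apply, mul_ite, Finset.sum_ite_eq']
        ring
      show ∑ i, u i * had c (Pi.single k s) i = M
      rw [this, hM, hk, hs]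
      split_ifs with h
      · rw [abs_of_nonneg h]; ring
      · rw [abs_of_neg (lt_of_not_ge h)]; ring
  · rintro y ⟨x, ⟨b, hb, rfl⟩, rfl⟩
    calc ∑ i, u i * had c b i ≤ ∑ i, |u i * c i| * |b i| := by
          apply Finset.sum_le_sum
          intro i _
          calc u i * had c b i ≤ |u i * had c b i| := le_abs_self _
            _ = |u i * c i| * |b i| := by rw [had]; rw [← abs_mul]; ring_nf
      _ ≤ ∑ i, M * |b i| := by
          apply Finset.sum_le_sum
          intro i _
          exact mul_le_mul_of_nonneg_right (Finset.le_sup' (fun k => |u k * c k|) (Finset.mem_univ i)) (abs_nonneg _)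
      _ = M * ∑ i, |b i| := by rw [Finset.mul_sum]
      _ ≤ M * 1 := mul_le_mul_of_nonneg_left hb hMnn
      _ = M := mul_one M

lemma sup_single_one {n : ℕ} (j : Fin n) (c : Fin n → ℝ) (hc : ∀ k, 0 ≤ c k) :
    Finset.univ.sup' ⟨j, Finset.mem_univ j⟩
      (fun k => |(Pi.single j (1:ℝ) : Fin n → ℝ) k * c k|) = c j := by
  apply le_antisymm
  · apply Finset.sup'_le
    intro k _
    rcases eq_or_ne k j with rfl | hkj
    · simp [abs_of_nonneg (hc k)]
    · simp [Pi.single_apply, hkj, hc j]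
  · have := Finset.le_sup' (fun k => |(Pi.single j (1:ℝ) : Fin n → ℝ) k * c k|)
      (Finset.mem_univ j)
    simpa [abs_of_nonneg (hc j)] using this

lemma sup_single_two {n : ℕ} {i j : Fin n} (hij : i ≠ j) (b : ℝ) (c : Fin n → ℝ)
    (hc : ∀ k, 0 ≤ c k) :
    Finset.univ.sup' ⟨j, Finset.mem_univ j⟩
      (fun k => |(Pi.single j 1 + Pi.single i b : Fin n → ℝ) k * c k|)
      = max (c j) (|b| * c i) := by
  have hj' : (Pi.single j 1 + Pi.single i b : Fin n → ℝ) j = 1 := by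
    simp [Pi.single_apply, hij]
  have hi' : (Pi.single j 1 + Pi.single i b : Fin n → ℝ) i = b := by
    simp [Pi.single_apply, hij]
  apply le_antisymm
  · apply Finset.sup'_le
    intro k _
    rcases eq_or_ne k j with rfl | hkj
    · rw [hj']; simp [abs_of_nonneg (hc k)]
    rcases eq_or_ne k i with rfl | hki
    · rw [hi', abs_mul, abs_of_nonneg (hc k)]; exact le_max_right _ _
    · have : (Pi.single j 1 + Pi.single i b : Fin n → ℝ) k = 0 := by
        simp [Pi.single_apply, hkj, hki]
      rw [this]
      simpa using le_max_of_le_left (hc j)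
  · apply max_le
    · have := Finset.le_sup' (fun k => |(Pi.single j 1 + Pi.single i b : Fin n → ℝ) k * c k|)
        (Finset.mem_univ j)
      simpa [hj', abs_of_nonneg (hc j)] using this
    · have := Finset.le_sup' (fun k => |(Pi.single j 1 + Pi.single i b : Fin n → ℝ) k * c k|)
        (Finset.mem_univ i)
      simpa [hi', abs_mul, abs_of_nonneg (hc i)] using this

lemma sum_single_mul {n : ℕ} (j : Fin n) (a : ℝ) (y : Fin n → ℝ) :
    ∑ k, (Pi.single j a : Fin n → ℝ) k * y k = a * y j := by
  simp [Pi.single_apply]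

lemma maxsplit (A B t M : ℝ) (ht : 0 < t) (htM : t * M = 1) :
    max A (t * B) = A + t * max (B - M * A) 0 := by
  have h1 : t * (B - M * A) = t * B - A := by linear_combination (-A) * htM
  rcases le_total (t * B) A with h | h
  · rw [max_eq_left h, max_eq_right (by nlinarith), mul_zero, add_zero]
  · rw [max_eq_right h, max_eq_left (by nlinarith), h1]; ring

theorem stmt12 {n : ℕ} {Ω : Type*} [MeasurableSpace Ω] (P : Measure Ω)
    [IsProbabilityMeasure P]
    (ζ : Ω → Fin n → ℝ) (hζnn : ∀ ω i, 0 ≤ ζ ω i) (hζint : Integrable ζ P)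
    (B₁ : Set (Fin n → ℝ)) (hB₁ : B₁ = {x | ∑ i, |x i| ≤ 1})
    (K : Set (Fin n → ℝ)) (hKconv : Convex ℝ K) (hKcpt : IsCompact K)
    (hKne : K.Nonempty)
    (hKsupp : ∀ u : Fin n → ℝ, suppFn K u = ∫ ω, suppFn (had (ζ ω) '' B₁) u ∂P)
    (j : Fin n) (hj : P {ω | ζ ω j = 0} = 0) :
    ∃ x : Fin n → ℝ,
      {y ∈ K | ∑ i, y i * (Pi.single j 1 : Fin n → ℝ) i = suppFn K (Pi.single j 1 : Fin n → ℝ)} = {x} := by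
  classical
  have hcomp : ∀ i, Integrable (fun ω => ζ ω i) P := fun i =>
    (ContinuousLinearMap.proj (R := ℝ) (φ := fun _ : Fin n => ℝ) i).integrable_comp hζint
  -- value of support function at e_j
  have hKe : suppFn K (Pi.single j 1 : Fin n → ℝ) = ∫ ω, ζ ω j ∂P := by
    rw [hKsupp]
    congr 1
    funext ω
    rw [hB₁, suppFn_had j, sup_single_one j _ (hζnn ω)]
  -- general upper bound
  have le_supp : ∀ y ∈ K, ∀ u : Fin n → ℝ, ∑ i, u i * y i ≤ suppFn K u := by
    intro y hy u
    have hcont : Continuous fun x : Fin n → ℝ => ∑ i, u i * x i :=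
      continuous_finset_sum _ (fun i _ => continuous_const.mul (continuous_apply i))
    exact le_csSup ((hKcpt.image hcont).bddAbove) ⟨y, hy, rfl⟩
  -- key uniqueness claim
  have key : ∀ y ∈ K, (∑ i, y i * (Pi.single j 1 : Fin n → ℝ) i
      = suppFn K (Pi.single j 1 : Fin n → ℝ)) →
      y = Pi.single j (suppFn K (Pi.single j 1 : Fin n → ℝ)) := by
    intro y hyK hyF
    have hyj : y j = suppFn K (Pi.single j 1 : Fin n → ℝ) := by
      rw [← hyF]
      rw [show ∑ i, y i * (Pi.single j 1 : Fin n → ℝ) i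
        = ∑ i, (Pi.single j 1 : Fin n → ℝ) i * y i from Finset.sum_congr rfl
          (fun i _ => mul_comm _ _), sum_single_mul, one_mul]
    funext i
    rcases eq_or_ne i j with rfl | hij
    · rw [hyj, Pi.single_eq_same]
    rw [Pi.single_eq_of_ne hij]
    -- show y i = 0
    set g : ℕ → Ω → ℝ := fun m ω => max (ζ ω i - (m + 1) * ζ ω j) 0 with hg
    have hgint : ∀ m : ℕ, Integrable (g m) P := fun m =>
      ((hcomp i).sub ((hcomp j).const_mul _)).pos_part
    have hkey : ∀ ε : ℝ, |ε| = 1 → ∀ m : ℕ, ε * y i ≤ ∫ ω, g m ω ∂P := by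
      intro ε hε m
      set t : ℝ := ((m : ℝ) + 1)⁻¹ with hts
      have ht : 0 < t := by positivity
      have htM : t * ((m : ℝ) + 1) = 1 := by
        rw [hts]; field_simp
      set u : Fin n → ℝ := Pi.single j 1 + Pi.single i (ε * t) with hu
      have h1 : ∑ k, u k * y k = y j + (ε * t) * y i := by
        simp only [hu, Pi.add_apply, add_mul, Finset.sum_add_distrib, sum_single_mul]
        ring
      have h2 : suppFn K u = ∫ ω, (ζ ω j + t * g m ω) ∂P := by
        rw [hKsupp]
        congr 1
        funext ω
        rw [hB₁, suppFn_had j, hu, sup_single_two hij _ _ (hζnn ω)]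
        have habs : |ε * t| = t := by
          rw [abs_mul, hε, one_mul, abs_of_pos ht]
        rw [habs]
        rw [maxsplit (ζ ω j) (ζ ω i) t ((m : ℝ) + 1) ht htM]
      have h3 := le_supp y hyK u
      rw [h1, h2] at h3
      rw [integral_add (hcomp j) ((hgint m).const_mul t)] at h3
      rw [MeasureTheory.integral_const_mul] at h3
      have hyj' : y j = ∫ ω, ζ ω j ∂P := by rw [hyj, hKe]
      have h4 : t * (ε * y i) ≤ t * ∫ ω, g m ω ∂P := by
        rw [hyj'] at h3; nlinarith [h3]
      exact le_of_mul_le_mul_left h4 ht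
    have hlim : Filter.Tendsto (fun m => ∫ ω, g m ω ∂P) Filter.atTop (nhds 0) := by
      have h0 : (0 : ℝ) = ∫ _ω, (0 : ℝ) ∂P := by simp
      rw [h0]
      apply tendsto_integral_of_dominated_convergence (fun ω => ζ ω i)
        (fun m => (hgint m).aestronglyMeasurable) (hcomp i)
      · intro m
        filter_upwards with ω
        rw [Real.norm_eq_abs, abs_of_nonneg (le_max_right _ _)]
        apply max_le _ (hζnn ω i)
        have : 0 ≤ ((m:ℝ) + 1) * ζ ω j := mul_nonneg (by positivity) (hζnn ω j)
        linarith
      · have hae : ∀ᵐ ω ∂P, ζ ω j ≠ 0 := by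
          rw [Filter.eventually_iff]
          rw [mem_ae_iff]
          convert hj using 2
          ext ω
          simp
        filter_upwards [hae] with ω hω
        have hζj : 0 < ζ ω j := lt_of_le_of_ne (hζnn ω j) (Ne.symm hω)
        have hev : ∀ᶠ m : ℕ in Filter.atTop, g m ω = 0 := by
          filter_upwards [Filter.eventually_ge_atTop ⌈ζ ω i / ζ ω j⌉₊] with m hm
          have h1 : ζ ω i / ζ ω j ≤ (m : ℝ) := le_trans (Nat.le_ceil _) (by exact_mod_cast hm)
          have h2 : ζ ω i ≤ (m : ℝ) * ζ ω j := by rw [div_le_iff₀ hζj] at h1; linarith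
          apply max_eq_right
          nlinarith [hζnn ω j]
        exact Filter.Tendsto.congr' (hev.mono fun m h => h.symm) tendsto_const_nhds
    have hp := ge_of_tendsto hlim (Filter.Eventually.of_forall (hkey 1 (by norm_num)))
    have hm := ge_of_tendsto hlim (Filter.Eventually.of_forall (hkey (-1) (by norm_num)))
    simp only [one_mul, neg_one_mul] at hp hm
    linarith
  -- existence of a maximizer
  have hcont : Continuous fun x : Fin n → ℝ =>
      ∑ i, (Pi.single j 1 : Fin n → ℝ) i * x i :=
    continuous_finset_sum _ (fun i _ => continuous_const.mul (continuous_apply i))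
  obtain ⟨z, hzK, hzmax⟩ := hKcpt.exists_isMaxOn hKne hcont.continuousOn
  have hz : suppFn K (Pi.single j 1 : Fin n → ℝ)
      = ∑ i, (Pi.single j 1 : Fin n → ℝ) i * z i := by
    apply IsGreatest.csSup_eq
    exact ⟨⟨z, hzK, rfl⟩, by rintro b ⟨x, hx, rfl⟩; exact hzmax hx⟩
  have hzface : z ∈ {y ∈ K | ∑ i, y i * (Pi.single j 1 : Fin n → ℝ) i
      = suppFn K (Pi.single j 1 : Fin n → ℝ)} := by
    refine ⟨hzK, ?_⟩
    rw [hz]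
    exact Finset.sum_congr rfl (fun i _ => mul_comm _ _)
  refine ⟨Pi.single j (suppFn K (Pi.single j 1 : Fin n → ℝ)), ?_⟩
  apply Set.eq_singleton_iff_unique_mem.mpr
  constructor
  · have hzx := key z hzface.1 hzface.2
    exact hzx ▸ hzface
  · intro y hy
    exact key y hy.1 hy.2
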